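/- (Theorem 1, first part.) Let r > 0, let n ≥ 1 be a natural number, and let x̃ ∈ ℝ². Let m = x̃/(n+1) and Σ = (n r²/(4(n+1)))·I₂ + (n/(n+1)²)·x̃ x̃ᵀ, the mean and covariance of the poisoned target class. Then the squared Mahalanobis distance of x̃ from the poisoned class satisfies d_M²(x̃) := (x̃ − m)ᵀ Σ⁻¹ (x̃ − m) = 4 n ‖x̃‖² / ( (n+1) r² + 4 ‖x̃‖² ); equivalently, when x̃ ≠ 0, d_M²(x̃) = (4n/((n+1) r²)) · ( (n+1) r² ) / ( (n+1) r² / ‖x̃‖² + 4 ). -/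

import Mathlib

open Matrix

/-- Theorem 1, first part: the squared Mahalanobis distance of the poisoned sample `x̃` from
the poisoned target class (mean `m = x̃/(n+1)`, covariance
`Σ = (n r²/(4(n+1)))·I₂ + (n/(n+1)²)·x̃ x̃ᵀ`) equals
`4 n ‖x̃‖² / ((n+1) r² + 4 ‖x̃‖²)`, equivalently (for `x̃ ≠ 0`)
`(4n/((n+1) r²)) · ((n+1) r²) / ((n+1) r²/‖x̃‖² + 4)`. -/
theorem mahalanobis_distance_of_poisoned_sample
    (r : ℝ) (hr : 0 < r) (n : ℕ) (hn : 1 ≤ n)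
    (xt : EuclideanSpace ℝ (Fin 2))
    (m : EuclideanSpace ℝ (Fin 2)) (hm : m = ((n : ℝ) + 1)⁻¹ • xt)
    (S : Matrix (Fin 2) (Fin 2) ℝ)
    (hS : S = ((n : ℝ) * r ^ 2 / (4 * ((n : ℝ) + 1))) • (1 : Matrix (Fin 2) (Fin 2) ℝ)
        + ((n : ℝ) / ((n : ℝ) + 1) ^ 2) • Matrix.of (fun i j => xt i * xt j)) :
    (xt - m) ⬝ᵥ (S⁻¹ *ᵥ (xt - m))
        = 4 * (n : ℝ) * ‖xt‖ ^ 2 / (((n : ℝ) + 1) * r ^ 2 + 4 * ‖xt‖ ^ 2) ∧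
      (xt ≠ 0 →
        (xt - m) ⬝ᵥ (S⁻¹ *ᵥ (xt - m))
          = (4 * (n : ℝ) / (((n : ℝ) + 1) * r ^ 2)) *
              ((((n : ℝ) + 1) * r ^ 2) / (((n : ℝ) + 1) * r ^ 2 / ‖xt‖ ^ 2 + 4))) := by
  have hnorm : ‖xt‖ ^ 2 = xt 0 ^ 2 + xt 1 ^ 2 := by
    rw [EuclideanSpace.norm_eq, Real.sq_sqrt (by positivity)]
    simp [Fin.sum_univ_two, sq_abs]
  have hnpos : (0:ℝ) < (n:ℝ) := by exact_mod_cast hn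
  set a := xt 0 with ha
  set b := xt 1 with hb
  set c : ℝ := (n : ℝ) * r ^ 2 / (4 * ((n : ℝ) + 1)) with hc
  set k : ℝ := (n : ℝ) / ((n : ℝ) + 1) ^ 2 with hk
  have hcpos : 0 < c := by rw [hc]; positivity
  have hkpos : 0 < k := by rw [hk]; positivity
  have hS' : S = !![c + k * a^2, k * (a*b); k * (a*b), c + k * b^2] := by
    rw [hS]
    ext i j
    fin_cases i <;> fin_cases j <;>
      simp only [Matrix.add_apply, Matrix.smul_apply, Matrix.one_apply, Matrix.of_apply,
        Matrix.cons_val_zero, Matrix.cons_val_one, Matrix.head_cons, smul_eq_mul,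
        Matrix.cons_val', Matrix.empty_val', Matrix.cons_val_fin_one,
        Matrix.head_fin_const, Fin.mk_zero, Fin.mk_one, ← ha, ← hb] <;>
      ring_nf <;> norm_num
  have hdet : S.det = c^2 + c * k * (a^2 + b^2) := by
    rw [hS', Matrix.det_fin_two_of]; ring
  have hdetpos : 0 < S.det := by
    rw [hdet]; positivity
  have hdetne : S.det ≠ 0 := ne_of_gt hdetpos
  have hinv : S⁻¹ = S.det⁻¹ • !![c + k * b^2, -(k * (a*b)); -(k * (a*b)), c + k * a^2] := by
    rw [Matrix.inv_def, hS', Matrix.adjugate_fin_two_of, Ring.inverse_eq_inv']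
  have hsub : ∀ i, (xt - m) i = ((n:ℝ)/((n:ℝ)+1)) * xt i := by
    intro i
    have hn1 : ((n:ℝ)+1) ≠ 0 := by positivity
    simp [hm, PiLp.sub_apply, PiLp.smul_apply]
    field_simp
    ring
  have key : (xt - m) ⬝ᵥ (S⁻¹ *ᵥ (xt - m))
      = 4 * (n : ℝ) * ‖xt‖ ^ 2 / (((n : ℝ) + 1) * r ^ 2 + 4 * ‖xt‖ ^ 2) := by
    have hn1 : ((n:ℝ)+1) ≠ 0 := by positivity
    have hden : ((n:ℝ) + 1) * r ^ 2 + 4 * ‖xt‖ ^ 2 ≠ 0 := by positivity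
    rw [hinv]
    simp only [Matrix.mulVec, dotProduct, Fin.sum_univ_two, Matrix.smul_apply,
      Matrix.cons_val', Matrix.cons_val_zero, Matrix.cons_val_one, Matrix.head_cons,
      Matrix.head_fin_const, Matrix.empty_val', Matrix.cons_val_fin_one, smul_eq_mul,
      Matrix.of_apply, ← WithLp.ofLp_sub, hsub, ← ha, ← hb]
    rw [hnorm, hdet]
    rw [hc, hk]
    have hr2 : r ^ 2 ≠ 0 := by positivity
    field_simp
    ring
  refine ⟨key, fun hx => ?_⟩
  have hxn : ‖xt‖ ^ 2 ≠ 0 := by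
    have := norm_pos_iff.mpr hx
    positivity
  rw [key]
  have hden : ((n:ℝ) + 1) * r ^ 2 + 4 * ‖xt‖ ^ 2 ≠ 0 := by positivity
  have hr2 : r ^ 2 ≠ 0 := by positivity
  have hn1 : ((n:ℝ)+1) ≠ 0 := by positivity
  have hden2 : ((n : ℝ) + 1) * r ^ 2 / ‖xt‖ ^ 2 + 4 ≠ 0 := by positivity
  field_simp
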